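/- For all Q⁺ ≠ Q⁻ in N and ν ∈ S¹, one has √2 |Q⁺ν·ν − Q⁻ν·ν| ≤ |Q⁺ − Q⁻|, and consequently |Q⁺−Q⁻|^α ≤ φ_α(Q⁺, Q⁻, ν) ≤ √2 |Q⁺−Q⁻|^α. -/

import Mathlib

open scoped BigOperators
open Matrix

/-- The jump energy density `φ_α(Q⁺,Q⁻,ν) = |Q⁺−Q⁻|^α (1 + √2|Q⁺ν·ν − Q⁻ν·ν|/|Q⁺−Q⁻|)^{1/2}`. -/
noncomputable def phiAlpha (α : ℝ) (A B : Matrix (Fin 2) (Fin 2) ℝ)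
    (ν : Fin 2 → ℝ) : ℝ :=
  Real.sqrt (∑ i, ∑ j, (A i j - B i j) ^ 2) ^ α *
    Real.sqrt (1 + Real.sqrt 2 * |(A.mulVec ν ⬝ᵥ ν) - (B.mulVec ν ⬝ᵥ ν)|
      / Real.sqrt (∑ i, ∑ j, (A i j - B i j) ^ 2))

lemma key_stmt15 (p0 p1 m0 m1 v0 v1 : ℝ) (hp : p0^2+p1^2=1) (hm : m0^2+m1^2=1)
    (hv : v0^2+v1^2=1) :
    ((p0*v0+p1*v1)^2 - (m0*v0+m1*v1)^2)^2 ≤ 1 - (p0*m0+p1*m1)^2 := by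
  set a := p0*v0+p1*v1 with ha
  set b := m0*v0+m1*v1 with hb
  set u := p1*v0-p0*v1 with hu
  set w := m1*v0-m0*v1 with hw
  set s := u*b + a*w with hs
  set c := a*b - u*w with hc
  set x := p0*m1-p1*m0 with hx
  have h1 : 1 - (p0*m0+p1*m1)^2 = x^2 := by
    rw [hx]; linear_combination (-(m0^2+m1^2))*hp - hm
  have hA : a^2 + u^2 = 1 := by
    rw [ha, hu]; linear_combination (v0^2+v1^2)*hp + hv
  have hB : b^2 + w^2 = 1 := by
    rw [hb, hw]; linear_combination (v0^2+v1^2)*hm + hv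
  have h2 : a^2 - b^2 = s * x := by
    rw [hs, hx, ha, hb, hu, hw]
    linear_combination (m0*v0+m1*v1)^2*hp - (p0*v0+p1*v1)^2*hm
  have h3 : s^2 + c^2 = 1 := by
    have h : s^2 + c^2 = (a^2+u^2)*(b^2+w^2) := by rw [hs, hc]; ring
    rw [h, hA, hB]; ring
  rw [h1, h2]
  nlinarith [sq_nonneg (c*x), sq_nonneg x, sq_nonneg c]

/-- For `Q⁺ ≠ Q⁻` in `N` and `ν ∈ S¹`: `√2|Q⁺ν·ν − Q⁻ν·ν| ≤ |Q⁺−Q⁻|`, and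
consequently `|Q⁺−Q⁻|^α ≤ φ_α(Q⁺,Q⁻,ν) ≤ √2 |Q⁺−Q⁻|^α`. -/
theorem stmt_15 (α : ℝ) (hα : 0 < α ∧ α < 1) (np nm ν : Fin 2 → ℝ)
    (hp : (np 0) ^ 2 + (np 1) ^ 2 = 1)
    (hm : (nm 0) ^ 2 + (nm 1) ^ 2 = 1)
    (hν : (ν 0) ^ 2 + (ν 1) ^ 2 = 1) :
    let Qp : Matrix (Fin 2) (Fin 2) ℝ := Matrix.of fun i j =>
      (1 / Real.sqrt 2) * (np i * np j - if i = j then 1 / 2 else 0)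
    let Qm : Matrix (Fin 2) (Fin 2) ℝ := Matrix.of fun i j =>
      (1 / Real.sqrt 2) * (nm i * nm j - if i = j then 1 / 2 else 0)
    let frob : ℝ := Real.sqrt (∑ i, ∑ j, (Qp i j - Qm i j) ^ 2)
    Qp ≠ Qm →
      (Real.sqrt 2 * |(Qp.mulVec ν ⬝ᵥ ν) - (Qm.mulVec ν ⬝ᵥ ν)| ≤ frob
        ∧ frob ^ α ≤ phiAlpha α Qp Qm ν
        ∧ phiAlpha α Qp Qm ν ≤ Real.sqrt 2 * frob ^ α) := by
  intro Qp Qm frob hne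
  have ht2 : Real.sqrt 2 ^ 2 = 2 := Real.sq_sqrt (by norm_num)
  have ht0 : (0:ℝ) < Real.sqrt 2 := Real.sqrt_pos.mpr (by norm_num)
  set t := Real.sqrt 2 with htdef
  have htne : t ≠ 0 := ne_of_gt ht0
  set S := ∑ i, ∑ j, (Qp i j - Qm i j) ^ 2 with hSdef
  -- entries
  have hent : ∀ i j, Qp i j - Qm i j = (np i * np j - nm i * nm j) / t := by
    intro i j
    simp only [Qp, Qm, Matrix.of_apply]
    field_simp
    rw [← htdef]; ring
  have hediv : ∀ X : ℝ, (X / t) ^ 2 = X ^ 2 / 2 := by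
    intro X; rw [div_pow, ht2]
  have hSsum : S = 1 - (np 0 * nm 0 + np 1 * nm 1) ^ 2 := by
    rw [hSdef]
    simp only [Fin.sum_univ_two, hent, hediv]
    linear_combination ((np 0^2 + np 1^2 + 1)/2) * hp + ((nm 0^2 + nm 1^2 + 1)/2) * hm
  have hdiff : (Qp.mulVec ν ⬝ᵥ ν) - (Qm.mulVec ν ⬝ᵥ ν)
      = ((np 0 * ν 0 + np 1 * ν 1)^2 - (nm 0 * ν 0 + nm 1 * ν 1)^2) / t := by
    simp only [Qp, Qm, Matrix.mulVec, dotProduct, Fin.sum_univ_two, Matrix.of_apply]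
    field_simp
    ring
  -- S positive
  have hS0 : 0 ≤ S := by
    rw [hSdef]
    exact Finset.sum_nonneg fun i _ => Finset.sum_nonneg fun j _ => sq_nonneg _
  have hSne : S ≠ 0 := by
    intro h
    apply hne
    ext i j
    have h1 := (Finset.sum_eq_zero_iff_of_nonneg
      (fun i _ => Finset.sum_nonneg fun j _ => sq_nonneg ((Qp i j - Qm i j)))).mp
      (hSdef ▸ h) i (Finset.mem_univ i)
    have h2 := (Finset.sum_eq_zero_iff_of_nonneg
      (fun j _ => sq_nonneg ((Qp i j - Qm i j)))).mp h1 j (Finset.mem_univ j)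
    have := sq_eq_zero_iff.mp h2
    linarith [this]
  have hSpos : 0 < S := lt_of_le_of_ne hS0 (Ne.symm hSne)
  have hfrob : frob = Real.sqrt S := rfl
  have hrpos : 0 < frob := by rw [hfrob]; exact Real.sqrt_pos.mpr hSpos
  -- part 1
  have hkey := key_stmt15 (np 0) (np 1) (nm 0) (nm 1) (ν 0) (ν 1) hp hm hν
  have part1 : t * |(Qp.mulVec ν ⬝ᵥ ν) - (Qm.mulVec ν ⬝ᵥ ν)| ≤ frob := by
    rw [hdiff, abs_div, abs_of_pos ht0, mul_comm t, div_mul_cancel₀ _ htne, hfrob, hSsum]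
    calc |(np 0 * ν 0 + np 1 * ν 1)^2 - (nm 0 * ν 0 + nm 1 * ν 1)^2|
        = Real.sqrt (((np 0 * ν 0 + np 1 * ν 1)^2 - (nm 0 * ν 0 + nm 1 * ν 1)^2)^2) :=
          (Real.sqrt_sq_eq_abs _).symm
      _ ≤ Real.sqrt (1 - (np 0 * nm 0 + np 1 * nm 1) ^ 2) := Real.sqrt_le_sqrt hkey
  refine ⟨part1, ?_, ?_⟩
  · -- lower bound
    have hphi : phiAlpha α Qp Qm ν = frob ^ α *
        Real.sqrt (1 + t * |(Qp.mulVec ν ⬝ᵥ ν) - (Qm.mulVec ν ⬝ᵥ ν)| / frob) := rfl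
    rw [hphi]
    have hq0 : 0 ≤ t * |(Qp.mulVec ν ⬝ᵥ ν) - (Qm.mulVec ν ⬝ᵥ ν)| / frob := by positivity
    have h1 : (1:ℝ) ≤ Real.sqrt (1 + t * |(Qp.mulVec ν ⬝ᵥ ν) - (Qm.mulVec ν ⬝ᵥ ν)| / frob) := by
      have h := Real.sqrt_le_sqrt (show (1:ℝ) ≤ 1 + t * |(Qp.mulVec ν ⬝ᵥ ν) - (Qm.mulVec ν ⬝ᵥ ν)| / frob by linarith)
      rwa [Real.sqrt_one] at h
    have hra : 0 ≤ frob ^ α := Real.rpow_nonneg (le_of_lt hrpos) α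
    nlinarith
  · -- upper bound
    have hphi : phiAlpha α Qp Qm ν = frob ^ α *
        Real.sqrt (1 + t * |(Qp.mulVec ν ⬝ᵥ ν) - (Qm.mulVec ν ⬝ᵥ ν)| / frob) := rfl
    rw [hphi, mul_comm t (frob ^ α)]
    have hq1 : t * |(Qp.mulVec ν ⬝ᵥ ν) - (Qm.mulVec ν ⬝ᵥ ν)| / frob ≤ 1 :=
      (div_le_one hrpos).mpr part1
    have h2 : Real.sqrt (1 + t * |(Qp.mulVec ν ⬝ᵥ ν) - (Qm.mulVec ν ⬝ᵥ ν)| / frob) ≤ t := by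
      rw [htdef]
      exact Real.sqrt_le_sqrt (by linarith)
    have hra : 0 ≤ frob ^ α := Real.rpow_nonneg (le_of_lt hrpos) α
    exact mul_le_mul_of_nonneg_left h2 hra
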